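/- Let 0 < s < 1 and let p satisfy 1 < p < 2 and p − s > 1. Let C₀ > 0 and let K : ℕ³ → ℂ satisfy |K(n,i,j)| ≤ C₀ (1 + |n − i − j|)^(−p) for all n, i, j ∈ ℕ. Then there exists a constant C > 0 such that for all sequences φ, ψ : ℕ → ℂ with ‖φ‖_{ℓ¹ₛ} < ∞ and ‖ψ‖_{ℓ¹ₛ} < ∞, the sequence defined by (φ ⋆ ψ)ₙ = Σ_{i∈ℕ} Σ_{j∈ℕ} K(n,i,j) φᵢ ψⱼ is well defined (the double series converges absolutely for each n) and satisfies ‖φ ⋆ ψ‖_{ℓ¹ₛ} ≤ C ‖φ‖_{ℓ¹ₛ} ‖ψ‖_{ℓ¹ₛ}. In particular, the weighted space ℓ¹ₛ(ℕ) is a Banach algebra under this kernel convolution. -/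

import Mathlib

set_option maxHeartbeats 1000000

/-- Summability of `(1+n)^(-q)` over `ℕ` for `q > 1`. -/
lemma aux_nat_summable {q : ℝ} (hq : 1 < q) :
    Summable (fun n : ℕ => (1 + (n : ℝ)) ^ (-q)) := by
  have h1 : Summable (fun n : ℕ => ((n : ℝ)) ^ (-q)) :=
    Real.summable_nat_rpow.mpr (by linarith)
  have h2 := (summable_nat_add_iff 1).mpr h1
  convert h2 using 2 with n
  · rfl
  push_cast
  ring_nf

/-- Summability of `(1+|z|)^(-q)` over `ℤ` for `q > 1`. -/
lemma aux_int_summable {q : ℝ} (hq : 1 < q) :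
    Summable (fun z : ℤ => (1 + |(z : ℝ)|) ^ (-q)) := by
  apply Summable.of_nat_of_neg
  · simpa using aux_nat_summable hq
  · simpa using aux_nat_summable hq

/-- The elementary inequality `1 + n ≤ (1 + m) * (1 + |n - m|)`. -/
lemma aux_base_ineq (n m : ℕ) :
    (1 + (n : ℝ)) ≤ (1 + (m : ℝ)) * (1 + |(n : ℝ) - (m : ℝ)|) := by
  have h1 : (n : ℝ) - m ≤ |(n : ℝ) - m| := le_abs_self _
  have h2 : (0 : ℝ) ≤ |(n : ℝ) - m| := abs_nonneg _
  have h3 : (0 : ℝ) ≤ (m : ℝ) := Nat.cast_nonneg m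
  nlinarith

/-- Product of two nonnegative summable series over `ℕ × ℕ`. -/
lemma aux_tsum_prod {f g : ℕ → ℝ} (hf : Summable f) (hg : Summable g)
    (hf0 : ∀ i, 0 ≤ f i) (hg0 : ∀ j, 0 ≤ g j) :
    ∑' ij : ℕ × ℕ, f ij.1 * g ij.2 = (∑' n, f n) * (∑' n, g n) := by
  have hs : Summable fun ij : ℕ × ℕ => f ij.1 * g ij.2 := hf.mul_of_nonneg hg hf0 hg0
  rw [Summable.tsum_prod' hs (fun i => hg.mul_left (f i))]
  calc ∑' (i : ℕ) (j : ℕ), f (i, j).1 * g (i, j).2 = ∑' i : ℕ, f i * ∑' j : ℕ, g j :=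
        tsum_congr fun i =>
          show (∑' j : ℕ, f i * g j) = f i * ∑' j : ℕ, g j from tsum_mul_left
    _ = _ := tsum_mul_right

/-- Banach-algebra property of the weighted space `ℓ¹ₛ(ℕ)` under a
kernel convolution with a kernel decaying like `(1 + |n - i - j|)^(-p)`. -/
theorem l1s_kernel_convolution_banach_algebra
    (s p C₀ : ℝ) (hs0 : 0 < s) (hs1 : s < 1)
    (hp1 : 1 < p) (hp2 : p < 2) (hps : 1 < p - s) (hC₀ : 0 < C₀)
    (K : ℕ → ℕ → ℕ → ℂ)
    (hK : ∀ n i j : ℕ, ‖K n i j‖ ≤ C₀ * (1 + |(n : ℤ) - i - j| : ℝ) ^ (-p)) :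
    ∃ C > 0, ∀ φ ψ : ℕ → ℂ,
      Summable (fun n : ℕ => (1 + n : ℝ) ^ s * ‖φ n‖) →
      Summable (fun n : ℕ => (1 + n : ℝ) ^ s * ‖ψ n‖) →
      (∀ n : ℕ, Summable (fun ij : ℕ × ℕ => ‖K n ij.1 ij.2 * φ ij.1 * ψ ij.2‖)) ∧
      Summable (fun n : ℕ =>
        (1 + n : ℝ) ^ s * ‖∑' ij : ℕ × ℕ, K n ij.1 ij.2 * φ ij.1 * ψ ij.2‖) ∧
      (∑' n : ℕ, (1 + n : ℝ) ^ s * ‖∑' ij : ℕ × ℕ, K n ij.1 ij.2 * φ ij.1 * ψ ij.2‖) ≤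
        C * (∑' n : ℕ, (1 + n : ℝ) ^ s * ‖φ n‖) * (∑' n : ℕ, (1 + n : ℝ) ^ s * ‖ψ n‖) := by
  set q : ℝ := p - s with hqdef
  have hq : 1 < q := hps
  have hint : Summable (fun z : ℤ => (1 + |(z : ℝ)|) ^ (-q)) := aux_int_summable hq
  set A : ℝ := ∑' z : ℤ, (1 + |(z : ℝ)|) ^ (-q) with hAdef
  have hA1 : (1 : ℝ) ≤ A := by
    have h0 : (1 + |((0 : ℤ) : ℝ)|) ^ (-q) ≤ A :=
      Summable.le_tsum hint 0 (fun j _ => by positivity)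
    simpa using h0
  have hA0 : (0 : ℝ) < A := lt_of_lt_of_le one_pos hA1
  -- the key single-sum estimate
  have key : ∀ m : ℕ,
      Summable (fun n : ℕ => (1 + (n : ℝ)) ^ s * (1 + |(n : ℝ) - (m : ℝ)|) ^ (-p)) ∧
      (∑' n : ℕ, (1 + (n : ℝ)) ^ s * (1 + |(n : ℝ) - (m : ℝ)|) ^ (-p)) ≤
        (1 + (m : ℝ)) ^ s * A := by
    intro m
    have hinj : Function.Injective (fun n : ℕ => (n : ℤ) - m) := by
      intro a b hab
      simpa using sub_left_injective hab
    have hmaj : Summable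
        (fun n : ℕ => (1 + (m : ℝ)) ^ s * ((1 + |(((n : ℤ) - m : ℤ) : ℝ)|) ^ (-q))) :=
      (hint.comp_injective hinj).mul_left _
    have hpt : ∀ n : ℕ, (1 + (n : ℝ)) ^ s * (1 + |(n : ℝ) - (m : ℝ)|) ^ (-p) ≤
        (1 + (m : ℝ)) ^ s * ((1 + |(((n : ℤ) - m : ℤ) : ℝ)|) ^ (-q)) := by
      intro n
      have hcast : |(((n : ℤ) - m : ℤ) : ℝ)| = |(n : ℝ) - (m : ℝ)| := by push_cast; ring_nf
      rw [hcast]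
      set t : ℝ := 1 + |(n : ℝ) - (m : ℝ)| with htdef
      have ht1 : (1 : ℝ) ≤ t := le_add_of_nonneg_right (abs_nonneg _)
      have ht0 : (0 : ℝ) < t := lt_of_lt_of_le one_pos ht1
      have h1 : (1 + (n : ℝ)) ^ s ≤ (1 + (m : ℝ)) ^ s * t ^ s := by
        rw [← Real.mul_rpow (by positivity) (le_of_lt ht0)]
        exact Real.rpow_le_rpow (by positivity) (aux_base_ineq n m) (le_of_lt hs0)
      calc (1 + (n : ℝ)) ^ s * t ^ (-p)
          ≤ ((1 + (m : ℝ)) ^ s * t ^ s) * t ^ (-p) := by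
            apply mul_le_mul_of_nonneg_right h1 (by positivity)
        _ = (1 + (m : ℝ)) ^ s * t ^ (-q) := by
            rw [mul_assoc, ← Real.rpow_add ht0]
            congr 1
            congr 1
            simp [hqdef]; ring
    have hsum : Summable (fun n : ℕ => (1 + (n : ℝ)) ^ s * (1 + |(n : ℝ) - (m : ℝ)|) ^ (-p)) :=
      Summable.of_nonneg_of_le (fun n => by positivity) hpt hmaj
    refine ⟨hsum, le_trans (Summable.tsum_le_tsum hpt hsum hmaj) ?_⟩
    rw [tsum_mul_left]
    apply mul_le_mul_of_nonneg_left _ (by positivity)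
    exact Summable.tsum_le_tsum_of_inj _ hinj (fun c _ => by positivity) (fun n => le_refl _)
      (hint.comp_injective hinj) hint
  refine ⟨C₀ * A, by positivity, fun φ ψ hφ hψ => ?_⟩
  -- plain ℓ¹ summability
  have hone : ∀ n : ℕ, (1 : ℝ) ≤ (1 + (n : ℝ)) ^ s := fun n =>
    Real.one_le_rpow (by simp) (le_of_lt hs0)
  have hφ' : Summable (fun i : ℕ => ‖φ i‖) := by
    apply Summable.of_nonneg_of_le (fun i => norm_nonneg _) _ hφ
    intro i
    nlinarith [hone i, norm_nonneg (φ i)]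
  have hψ' : Summable (fun i : ℕ => ‖ψ i‖) := by
    apply Summable.of_nonneg_of_le (fun i => norm_nonneg _) _ hψ
    intro i
    nlinarith [hone i, norm_nonneg (ψ i)]
  -- kernel bound rewritten with real absolute values
  have hK' : ∀ n i j : ℕ, ‖K n i j‖ ≤ C₀ * (1 + |(n : ℝ) - i - j|) ^ (-p) := by
    intro n i j
    have := hK n i j
    have hcast : ((|(n : ℤ) - i - j| : ℤ) : ℝ) = |(n : ℝ) - i - j| := by push_cast; ring_nf
    rwa [hcast] at this
  -- well-definedness for each n
  have hwell : ∀ n : ℕ, Summable (fun ij : ℕ × ℕ => ‖K n ij.1 ij.2 * φ ij.1 * ψ ij.2‖) := by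
    intro n
    have hbase : Summable (fun ij : ℕ × ℕ => ‖φ ij.1‖ * ‖ψ ij.2‖) :=
      hφ'.mul_of_nonneg hψ' (fun i => norm_nonneg _) (fun j => norm_nonneg _)
    apply Summable.of_nonneg_of_le (fun ij => norm_nonneg _) _ (hbase.mul_left C₀)
    intro ij
    have h1 : ‖K n ij.1 ij.2 * φ ij.1 * ψ ij.2‖ = ‖K n ij.1 ij.2‖ * ‖φ ij.1‖ * ‖ψ ij.2‖ := by
      rw [norm_mul, norm_mul]
    rw [h1]
    have h2 : ‖K n ij.1 ij.2‖ ≤ C₀ := by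
      have := hK' n ij.1 ij.2
      have h3 : (1 + |(n : ℝ) - ij.1 - ij.2|) ^ (-p) ≤ 1 :=
        Real.rpow_le_one_of_one_le_of_nonpos (le_add_of_nonneg_right (abs_nonneg _)) (by linarith)
      nlinarith
    have := mul_le_mul_of_nonneg_right (mul_le_mul_of_nonneg_right h2 (norm_nonneg (φ ij.1)))
      (norm_nonneg (ψ ij.2))
    linarith [this, mul_assoc C₀ ‖φ ij.1‖ ‖ψ ij.2‖]
  -- the dominating function on the full product
  set H : (ℕ × ℕ) × ℕ → ℝ := fun x =>
    (1 + (x.2 : ℝ)) ^ s * (C₀ * (1 + |(x.2 : ℝ) - x.1.1 - x.1.2|) ^ (-p)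
      * (‖φ x.1.1‖ * ‖ψ x.1.2‖)) with hHdef
  have hHnonneg : ∀ x, 0 ≤ H x := fun x => by positivity
  -- for each (i,j), the sum over n of H is controlled
  have hHinner : ∀ ij : ℕ × ℕ, Summable (fun n : ℕ => H (ij, n)) := by
    intro ij
    have := ((key (ij.1 + ij.2)).1).mul_left (C₀ * (‖φ ij.1‖ * ‖ψ ij.2‖))
    apply Summable.congr this
    intro n
    simp only [hHdef]
    have : |(n : ℝ) - ij.1 - ij.2| = |(n : ℝ) - ((ij.1 + ij.2 : ℕ) : ℝ)| := by push_cast; ring_nf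
    rw [this]; ring
  have hHbound : ∀ ij : ℕ × ℕ, (∑' n : ℕ, H (ij, n)) ≤
      (C₀ * A) * ((1 + (ij.1 : ℝ)) ^ s * ‖φ ij.1‖ * ((1 + (ij.2 : ℝ)) ^ s * ‖ψ ij.2‖)) := by
    intro ij
    have heq : (∑' n : ℕ, H (ij, n)) = (C₀ * (‖φ ij.1‖ * ‖ψ ij.2‖)) *
        ∑' n : ℕ, (1 + (n : ℝ)) ^ s * (1 + |(n : ℝ) - ((ij.1 + ij.2 : ℕ) : ℝ)|) ^ (-p) := by
      rw [← tsum_mul_left]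
      apply tsum_congr
      intro n
      simp only [hHdef]
      have : |(n : ℝ) - ij.1 - ij.2| = |(n : ℝ) - ((ij.1 + ij.2 : ℕ) : ℝ)| := by push_cast; ring_nf
      rw [this]; ring
    rw [heq]
    have h1 := (key (ij.1 + ij.2)).2
    have h2 : (1 + ((ij.1 + ij.2 : ℕ) : ℝ)) ^ s ≤ (1 + (ij.1 : ℝ)) ^ s * (1 + (ij.2 : ℝ)) ^ s := by
      rw [← Real.mul_rpow (by positivity) (by positivity)]
      apply Real.rpow_le_rpow (by positivity) _ (le_of_lt hs0)
      push_cast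
      nlinarith [Nat.cast_nonneg (α := ℝ) ij.1, Nat.cast_nonneg (α := ℝ) ij.2]
    have h3 : (C₀ * (‖φ ij.1‖ * ‖ψ ij.2‖)) *
        (∑' n : ℕ, (1 + (n : ℝ)) ^ s * (1 + |(n : ℝ) - ((ij.1 + ij.2 : ℕ) : ℝ)|) ^ (-p)) ≤
        (C₀ * (‖φ ij.1‖ * ‖ψ ij.2‖)) * ((1 + ((ij.1 + ij.2 : ℕ) : ℝ)) ^ s * A) :=
      mul_le_mul_of_nonneg_left h1 (by positivity)
    refine le_trans h3 ?_
    have h4 : (1 + ((ij.1 + ij.2 : ℕ) : ℝ)) ^ s * A ≤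
        ((1 + (ij.1 : ℝ)) ^ s * (1 + (ij.2 : ℝ)) ^ s) * A :=
      mul_le_mul_of_nonneg_right h2 (le_of_lt hA0)
    have h5 := mul_le_mul_of_nonneg_left h4 (show (0:ℝ) ≤ C₀ * (‖φ ij.1‖ * ‖ψ ij.2‖) by positivity)
    refine le_trans h5 (le_of_eq ?_)
    ring
  -- the weighted product sequence is summable
  have hprodsum : Summable (fun ij : ℕ × ℕ =>
      (1 + (ij.1 : ℝ)) ^ s * ‖φ ij.1‖ * ((1 + (ij.2 : ℝ)) ^ s * ‖ψ ij.2‖)) :=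
    hφ.mul_of_nonneg hψ (fun i => by positivity) (fun j => by positivity)
  -- H is summable on the full product
  have hHsum : Summable H := by
    rw [summable_prod_of_nonneg hHnonneg]
    refine ⟨hHinner, ?_⟩
    apply Summable.of_nonneg_of_le (fun ij => tsum_nonneg (fun n => hHnonneg _)) hHbound
      (hprodsum.mul_left (C₀ * A))
  -- the actual summand, dominated by H
  set G : (ℕ × ℕ) × ℕ → ℝ := fun x =>
    (1 + (x.2 : ℝ)) ^ s * ‖K x.2 x.1.1 x.1.2 * φ x.1.1 * ψ x.1.2‖ with hGdef
  have hGnonneg : ∀ x, 0 ≤ G x := fun x => by positivity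
  have hGH : ∀ x, G x ≤ H x := by
    intro x
    simp only [hGdef, hHdef]
    apply mul_le_mul_of_nonneg_left _ (by positivity)
    rw [norm_mul, norm_mul]
    calc ‖K x.2 x.1.1 x.1.2‖ * ‖φ x.1.1‖ * ‖ψ x.1.2‖
        ≤ (C₀ * (1 + |(x.2 : ℝ) - x.1.1 - x.1.2|) ^ (-p)) * ‖φ x.1.1‖ * ‖ψ x.1.2‖ := by
          apply mul_le_mul_of_nonneg_right (mul_le_mul_of_nonneg_right (hK' x.2 x.1.1 x.1.2)
            (norm_nonneg _)) (norm_nonneg _)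
      _ = C₀ * (1 + |(x.2 : ℝ) - x.1.1 - x.1.2|) ^ (-p) * (‖φ x.1.1‖ * ‖ψ x.1.2‖) := by ring
  have hGsum : Summable G := Summable.of_nonneg_of_le hGnonneg hGH hHsum
  -- summability in n of ∑'_{ij} G
  have hGswap : Summable (fun x : ℕ × (ℕ × ℕ) => G (x.2, x.1)) :=
    hGsum.prod_symm
  have hGinner2 : ∀ n : ℕ, Summable (fun ij : ℕ × ℕ => G (ij, n)) :=
    fun n => ((summable_prod_of_nonneg (fun x => hGnonneg _)).mp hGswap).1 n
  have hGn : Summable (fun n : ℕ => ∑' ij : ℕ × ℕ, G (ij, n)) :=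
    ((summable_prod_of_nonneg (fun x => hGnonneg _)).mp hGswap).2
  have hHswap : Summable (fun x : ℕ × (ℕ × ℕ) => H (x.2, x.1)) :=
    hHsum.prod_symm
  have hHinner2 : ∀ n : ℕ, Summable (fun ij : ℕ × ℕ => H (ij, n)) :=
    fun n => ((summable_prod_of_nonneg (fun x => hHnonneg _)).mp hHswap).1 n
  have hHn : Summable (fun n : ℕ => ∑' ij : ℕ × ℕ, H (ij, n)) :=
    ((summable_prod_of_nonneg (fun x => hHnonneg _)).mp hHswap).2
  -- pointwise bound for the weighted norm of the convolution
  have hptwise : ∀ n : ℕ,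
      (1 + (n : ℝ)) ^ s * ‖∑' ij : ℕ × ℕ, K n ij.1 ij.2 * φ ij.1 * ψ ij.2‖ ≤
      ∑' ij : ℕ × ℕ, G (ij, n) := by
    intro n
    have h1 : ‖∑' ij : ℕ × ℕ, K n ij.1 ij.2 * φ ij.1 * ψ ij.2‖ ≤
        ∑' ij : ℕ × ℕ, ‖K n ij.1 ij.2 * φ ij.1 * ψ ij.2‖ := norm_tsum_le_tsum_norm (hwell n)
    calc (1 + (n : ℝ)) ^ s * ‖∑' ij : ℕ × ℕ, K n ij.1 ij.2 * φ ij.1 * ψ ij.2‖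
        ≤ (1 + (n : ℝ)) ^ s * ∑' ij : ℕ × ℕ, ‖K n ij.1 ij.2 * φ ij.1 * ψ ij.2‖ :=
          mul_le_mul_of_nonneg_left h1 (by positivity)
      _ = ∑' ij : ℕ × ℕ, G (ij, n) := by rw [← tsum_mul_left]
  refine ⟨hwell, ?_, ?_⟩
  · exact Summable.of_nonneg_of_le (fun n => by positivity) hptwise hGn
  · have hmain : Summable (fun n : ℕ =>
        (1 + (n : ℝ)) ^ s * ‖∑' ij : ℕ × ℕ, K n ij.1 ij.2 * φ ij.1 * ψ ij.2‖) :=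
      Summable.of_nonneg_of_le (fun n => by positivity) hptwise hGn
    have step1 : (∑' n : ℕ, (1 + (n : ℝ)) ^ s *
        ‖∑' ij : ℕ × ℕ, K n ij.1 ij.2 * φ ij.1 * ψ ij.2‖) ≤
        ∑' n : ℕ, ∑' ij : ℕ × ℕ, G (ij, n) := Summable.tsum_le_tsum hptwise hmain hGn
    have step2 : (∑' n : ℕ, ∑' ij : ℕ × ℕ, G (ij, n)) ≤
        ∑' n : ℕ, ∑' ij : ℕ × ℕ, H (ij, n) := by
      apply Summable.tsum_le_tsum _ hGn hHn
      intro n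
      exact Summable.tsum_le_tsum (fun ij => hGH (ij, n)) (hGinner2 n) (hHinner2 n)
    -- Fubini for H: swap order of summation
    have step3 : (∑' n : ℕ, ∑' ij : ℕ × ℕ, H (ij, n)) = ∑' ij : ℕ × ℕ, ∑' n : ℕ, H (ij, n) := by
      rw [← Summable.tsum_prod' hHswap (fun n => hHinner2 n),
        ← Summable.tsum_prod' hHsum hHinner]
      exact (Equiv.prodComm ℕ (ℕ × ℕ)).tsum_eq H
    have step4 : (∑' ij : ℕ × ℕ, ∑' n : ℕ, H (ij, n)) ≤
        ∑' ij : ℕ × ℕ, (C₀ * A) * ((1 + (ij.1 : ℝ)) ^ s * ‖φ ij.1‖ *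
          ((1 + (ij.2 : ℝ)) ^ s * ‖ψ ij.2‖)) := by
      apply Summable.tsum_le_tsum hHbound ((summable_prod_of_nonneg hHnonneg).mp hHsum).2
        (hprodsum.mul_left (C₀ * A))
    have step5 : (∑' ij : ℕ × ℕ, (C₀ * A) * ((1 + (ij.1 : ℝ)) ^ s * ‖φ ij.1‖ *
          ((1 + (ij.2 : ℝ)) ^ s * ‖ψ ij.2‖))) =
        (C₀ * A) * (∑' n : ℕ, (1 + (n : ℝ)) ^ s * ‖φ n‖) *
          (∑' n : ℕ, (1 + (n : ℝ)) ^ s * ‖ψ n‖) := by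
      rw [tsum_mul_left,
        aux_tsum_prod hφ hψ (fun i => by positivity) (fun j => by positivity)]
      ring
    calc (∑' n : ℕ, (1 + (n : ℝ)) ^ s *
        ‖∑' ij : ℕ × ℕ, K n ij.1 ij.2 * φ ij.1 * ψ ij.2‖)
        ≤ ∑' n : ℕ, ∑' ij : ℕ × ℕ, G (ij, n) := step1
      _ ≤ ∑' n : ℕ, ∑' ij : ℕ × ℕ, H (ij, n) := step2
      _ = ∑' ij : ℕ × ℕ, ∑' n : ℕ, H (ij, n) := step3
      _ ≤ _ := le_trans step4 (le_of_eq step5)
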